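/- BDF2 stability inequality core: let αₙ := ‖(uₙ, u_{n-1})‖ₙ² (BDF2 tuple norms) and Gₙ ≥ 0 satisfy αₙ + Δt Gₙ ≤ α_{n-1} + Δt c αₙ + Δt fₙ + (Δt/2) G_{n-1} for n ≥ 2, with Δt c < 1. Then for all N ≥ 2: α_N + (Δt/2) Σ_{n=2}^N Gₙ ≤ exp(c N Δt/(1 - cΔt)) (α₁ + (Δt/2) G₁ + Δt Σ_{n=2}^N fₙ). -/

import Mathlib

open Finset

/-- Core stability inequality for the BDF2 scheme. -/
theorem bdf2_stability_core (Δt c : ℝ) (α G f : ℕ → ℝ)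
    (hΔt : 0 < Δt) (hc : 0 ≤ c) (hsmall : c * Δt < 1)
    (hα : ∀ n, 0 ≤ α n) (hG : ∀ n, 0 ≤ G n) (hf : ∀ n, 0 ≤ f n)
    (hrec : ∀ n, 2 ≤ n →
      α n + Δt * G n ≤ α (n - 1) + Δt * c * α n + Δt * f n + (Δt / 2) * G (n - 1)) :
    ∀ N, 2 ≤ N →
      α N + (Δt / 2) * ∑ n ∈ Icc 2 N, G n
        ≤ Real.exp (c * N * Δt / (1 - c * Δt))
            * (α 1 + (Δt / 2) * G 1 + Δt * ∑ n ∈ Icc 2 N, f n) := by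
  have h1 : 0 < 1 - c * Δt := by linarith
  set lam : ℝ := (1 - c * Δt)⁻¹ with hlam
  have hlampos : 0 < lam := inv_pos.mpr h1
  have hlam1 : 1 ≤ lam := by
    rw [hlam]
    rw [le_inv_comm₀ one_pos h1]
    simp
    nlinarith
  set T : ℕ → ℝ := fun n => α n + (Δt/2) * G n + (Δt/2) * ∑ k ∈ Icc 2 n, G k with hT
  have hSnn : ∀ n, (0:ℝ) ≤ ∑ k ∈ Icc 2 n, G k := fun n =>
    Finset.sum_nonneg fun k _ => hG k
  have hTnn : ∀ n, 0 ≤ T n := by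
    intro n
    have := hα n; have := hG n; have := hSnn n
    simp only [hT]
    nlinarith
  have hstep : ∀ n, 2 ≤ n → T n ≤ lam * (T (n-1) + Δt * f n) := by
    intro n hn
    obtain ⟨m, rfl⟩ : ∃ m, n = m + 1 := ⟨n - 1, by omega⟩
    have hm1 : (m + 1 : ℕ) - 1 = m := by omega
    have hrn := hrec (m+1) hn
    rw [hm1] at hrn ⊢
    have hsum : ∑ k ∈ Icc 2 (m+1), G k = ∑ k ∈ Icc 2 m, G k + G (m+1) :=
      Finset.sum_Icc_succ_top (by omega) G
    have key : (1 - c * Δt) * T (m+1) ≤ T m + Δt * f (m+1) := by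
      simp only [hT, hsum]
      have h2 : 0 ≤ c * Δt := by positivity
      nlinarith [hSnn m, hG (m+1), hG m, hα (m+1), mul_nonneg h2 (hG (m+1)),
        mul_nonneg h2 (hSnn m), mul_nonneg h2 (mul_nonneg hΔt.le (hG (m+1))),
        mul_nonneg h2 (mul_nonneg hΔt.le (hSnn m))]
    have : T (m+1) = lam * ((1 - c * Δt) * T (m+1)) := by
      rw [hlam]; field_simp
    rw [this]
    exact mul_le_mul_of_nonneg_left key hlampos.le
  have main : ∀ N, 1 ≤ N → T N ≤ lam^(N-1) * (T 1 + Δt * ∑ n ∈ Icc 2 N, f n) := by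
    intro N hN
    induction N, hN using Nat.le_induction with
    | base => simp
    | succ n hn ih =>
      have hs := hstep (n+1) (by omega)
      rw [show (n+1) - 1 = n from rfl] at hs
      have hsum : ∑ k ∈ Icc 2 (n+1), f k = ∑ k ∈ Icc 2 n, f k + f (n+1) :=
        Finset.sum_Icc_succ_top (by omega) f
      have hpow : lam * lam^(n-1) = lam^n := by
        rw [← pow_succ']
        congr 1
        omega
      have hpow2 : lam ≤ lam^n := by
        calc lam = lam^1 := (pow_one lam).symm
        _ ≤ lam^n := pow_le_pow_right₀ hlam1 hn
      have hfn : 0 ≤ Δt * f (n+1) := mul_nonneg hΔt.le (hf _)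
      calc T (n+1) ≤ lam * (T n + Δt * f (n+1)) := hs
        _ ≤ lam * (lam^(n-1) * (T 1 + Δt * ∑ k ∈ Icc 2 n, f k) + Δt * f (n+1)) := by
            apply mul_le_mul_of_nonneg_left _ hlampos.le
            linarith [ih]
        _ = lam^n * (T 1 + Δt * ∑ k ∈ Icc 2 n, f k) + lam * (Δt * f (n+1)) := by
            rw [mul_add, ← mul_assoc, hpow]
        _ ≤ lam^n * (T 1 + Δt * ∑ k ∈ Icc 2 n, f k) + lam^n * (Δt * f (n+1)) := by
            have := mul_le_mul_of_nonneg_right hpow2 hfn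
            linarith
        _ = lam^((n+1)-1) * (T 1 + Δt * ∑ k ∈ Icc 2 (n+1), f k) := by
            rw [hsum, show (n+1)-1 = n from rfl]; ring
  intro N hN
  have hm := main N (by omega)
  have hB : 0 ≤ T 1 + Δt * ∑ n ∈ Icc 2 N, f n := by
    have h1' := hTnn 1
    have h2' : 0 ≤ ∑ n ∈ Icc 2 N, f n := Finset.sum_nonneg fun k _ => hf k
    have := mul_nonneg hΔt.le h2'
    linarith
  have hT1 : T 1 = α 1 + (Δt/2) * G 1 := by
    simp [hT]
  have hx : c * Δt / (1 - c * Δt) + 1 = lam := by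
    rw [hlam]; field_simp; ring
  have hexp1 : lam ≤ Real.exp (c * Δt / (1 - c * Δt)) := by
    have := Real.add_one_le_exp (c * Δt / (1 - c * Δt))
    linarith
  have hexp : lam^(N-1) ≤ Real.exp (c * N * Δt / (1 - c * Δt)) := by
    calc lam^(N-1) ≤ lam^N := pow_le_pow_right₀ hlam1 (by omega)
      _ ≤ (Real.exp (c * Δt / (1 - c * Δt)))^N :=
          pow_le_pow_left₀ hlampos.le hexp1 N
      _ = Real.exp (N * (c * Δt / (1 - c * Δt))) := (Real.exp_nat_mul _ N).symm
      _ = Real.exp (c * N * Δt / (1 - c * Δt)) := by ring_nf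
  have hαT : α N + (Δt/2) * ∑ n ∈ Icc 2 N, G n ≤ T N := by
    simp only [hT]
    have : 0 ≤ (Δt/2) * G N := mul_nonneg (by linarith) (hG N)
    linarith
  calc α N + (Δt/2) * ∑ n ∈ Icc 2 N, G n ≤ T N := hαT
    _ ≤ lam^(N-1) * (T 1 + Δt * ∑ n ∈ Icc 2 N, f n) := hm
    _ ≤ Real.exp (c * N * Δt / (1 - c * Δt)) * (T 1 + Δt * ∑ n ∈ Icc 2 N, f n) :=
        mul_le_mul_of_nonneg_right hexp hB
    _ = Real.exp (c * N * Δt / (1 - c * Δt)) * (α 1 + (Δt/2) * G 1 + Δt * ∑ n ∈ Icc 2 N, f n) := by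
        rw [hT1]
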